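/- Let ℬ be an almost disjoint family splitting a family 𝒜 of cylinders in ω × {0,1}, and let JL(ℬ) be the closed linear span in ℓ∞(ω × {0,1}) of the indicator functions of singletons, members of ℬ, and ω × {0,1}. Define P : JL(ℬ) → JL(ℬ) by (Pf)(n,0) = (Pf)(n,1) = (f(n,0) + f(n,1))/2. Then P is a well-defined bounded linear projection of norm one, its range is the set of functions in JL(ℬ) constant on each cylinder c_n = {(n,0),(n,1)}, and its kernel is Y = {f ∈ JL(ℬ) : f(n,0) = −f(n,1) for all n ∈ ω}. -/

import Mathlib

/-- `B` splits the cylinder `C₀ × {0,1}`. -/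
def Splits (C₀ : Set ℕ) (B : Set (ℕ × Bool)) : Prop :=
  B ⊆ C₀ ×ˢ (Set.univ : Set Bool) ∧ ∀ n ∈ C₀, Xor' ((n, false) ∈ B) ((n, true) ∈ B)

/-- The indicator function of `S ⊆ ℕ × {0,1}` as an element of `ℓ∞(ℕ × {0,1})`. -/
noncomputable def indLp (S : Set (ℕ × Bool)) : lp (fun _ : ℕ × Bool => ℝ) ⊤ :=
  ⟨S.indicator 1, memℓp_infty ⟨1, by
    rintro r ⟨p, rfl⟩
    by_cases h : p ∈ S <;> simp [Set.indicator, h]⟩⟩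

/-- The Johnson–Lindenstrauss space `JL(ℬ)`: the closed linear span in `ℓ∞(ℕ × {0,1})` of
the indicator functions of singletons, of the members of `ℬ`, and of `ℕ × {0,1}`. -/
noncomputable def JLspace (ℬ : Set (Set (ℕ × Bool))) :
    Submodule ℝ (lp (fun _ : ℕ × Bool => ℝ) ⊤) :=
  (Submodule.span ℝ
    ((fun p : ℕ × Bool => indLp {p}) '' Set.univ ∪ indLp '' ℬ ∪
      {indLp Set.univ})).topologicalClosure

/-- The averaging map `(Pf)(n,0) = (Pf)(n,1) = (f(n,0) + f(n,1))/2` on `ℓ∞(ℕ × {0,1})`. -/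
noncomputable def Pmap (f : lp (fun _ : ℕ × Bool => ℝ) ⊤) : lp (fun _ : ℕ × Bool => ℝ) ⊤ :=
  ⟨fun p => (f (p.1, false) + f (p.1, true)) / 2, memℓp_infty ⟨‖f‖, by
    rintro r ⟨p, rfl⟩
    have h0 := lp.norm_apply_le_norm (by norm_num : (⊤ : ENNReal) ≠ 0) f (p.1, false)
    have h1 := lp.norm_apply_le_norm (by norm_num : (⊤ : ENNReal) ≠ 0) f (p.1, true)
    simp only [Real.norm_eq_abs] at *
    have habs := abs_add_le (f (p.1, false)) (f (p.1, true))
    have h2 : |(f (p.1, false) + f (p.1, true)) / 2| =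
        |f (p.1, false) + f (p.1, true)| / 2 := by
      rw [abs_div]; norm_num
    rw [h2]; linarith⟩⟩

lemma Pmap_apply (f : lp (fun _ : ℕ × Bool => ℝ) ⊤) (p : ℕ × Bool) :
    Pmap f p = (f (p.1, false) + f (p.1, true)) / 2 := rfl

open Classical in
lemma indLp_apply (S : Set (ℕ × Bool)) (p : ℕ × Bool) :
    indLp S p = if p ∈ S then 1 else 0 := by
  simp [indLp, Set.indicator_apply]

lemma lp_ext {f g : lp (fun _ : ℕ × Bool => ℝ) ⊤} (h : ∀ p, f p = g p) : f = g :=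
  lp.ext (funext h)

lemma Pmap_add (f g : lp (fun _ : ℕ × Bool => ℝ) ⊤) : Pmap (f + g) = Pmap f + Pmap g := by
  apply lp_ext; intro p
  simp only [Pmap_apply, lp.coeFn_add, Pi.add_apply]
  ring

lemma Pmap_smul (c : ℝ) (f : lp (fun _ : ℕ × Bool => ℝ) ⊤) : Pmap (c • f) = c • Pmap f := by
  apply lp_ext; intro p
  simp only [Pmap_apply, lp.coeFn_smul, Pi.smul_apply, smul_eq_mul]
  ring

lemma Pmap_norm_le (f : lp (fun _ : ℕ × Bool => ℝ) ⊤) : ‖Pmap f‖ ≤ ‖f‖ := by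
  apply lp.norm_le_of_forall_le (norm_nonneg f)
  intro p
  have h0 := lp.norm_apply_le_norm (by norm_num : (⊤ : ENNReal) ≠ 0) f (p.1, false)
  have h1 := lp.norm_apply_le_norm (by norm_num : (⊤ : ENNReal) ≠ 0) f (p.1, true)
  rw [Pmap_apply]
  simp only [Real.norm_eq_abs] at *
  have habs := abs_add_le (f (p.1, false)) (f (p.1, true))
  have h2 : |(f (p.1, false) + f (p.1, true)) / 2| =
      |f (p.1, false) + f (p.1, true)| / 2 := by rw [abs_div]; norm_num
  rw [h2]; linarith

noncomputable def Plin : lp (fun _ : ℕ × Bool => ℝ) ⊤ →L[ℝ] lp (fun _ : ℕ × Bool => ℝ) ⊤ :=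
  LinearMap.mkContinuous
    { toFun := Pmap, map_add' := Pmap_add, map_smul' := Pmap_smul } 1
    (fun f => by rw [one_mul]; exact Pmap_norm_le f)

lemma Pmap_single (q : ℕ × Bool) :
    Pmap (indLp {q}) = (2⁻¹ : ℝ) • (indLp {(q.1, false)} + indLp {(q.1, true)}) := by
  apply lp_ext; rintro ⟨m, c⟩
  simp only [Pmap_apply, lp.coeFn_smul, Pi.smul_apply, lp.coeFn_add, Pi.add_apply,
    indLp_apply, Set.mem_singleton_iff, Prod.mk.injEq, smul_eq_mul]
  obtain ⟨n, b⟩ := q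
  by_cases h : m = n <;> cases b <;> cases c <;> simp [h] <;> norm_num

lemma Pmap_split {C₀ : Set ℕ} {B0' B1' : Set (ℕ × Bool)} (hs : Splits C₀ B0')
    (hc : B1' = (C₀ ×ˢ (Set.univ : Set Bool)) \ B0') :
    Pmap (indLp B0') = (2⁻¹ : ℝ) • (indLp B0' + indLp B1') ∧
    Pmap (indLp B1') = (2⁻¹ : ℝ) • (indLp B0' + indLp B1') := by
  obtain ⟨hsub, hxor⟩ := hs
  have hmem : ∀ m : ℕ, ∀ c : Bool, (m, c) ∈ B1' ↔ (m ∈ C₀ ∧ (m, c) ∉ B0') := by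
    intro m c; subst hc
    simp [Set.mem_diff, Set.mem_prod]
  constructor <;> (apply lp_ext; rintro ⟨m, c⟩) <;>
  · simp only [Pmap_apply, lp.coeFn_smul, Pi.smul_apply, lp.coeFn_add, Pi.add_apply,
      indLp_apply, smul_eq_mul]
    by_cases hm : m ∈ C₀
    · have hx := hxor m hm
      have h1 := hmem m false
      have h2 := hmem m true
      have h3 := hmem m c
      rcases hx with ⟨ha, hb⟩ | ⟨ha, hb⟩ <;>
        by_cases hcB : (m, c) ∈ B0' <;>
        simp_all <;> norm_num
    · have h0 : (m, false) ∉ B0' := fun h => hm (by simpa using (hsub h).1)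
      have h1 : (m, true) ∉ B0' := fun h => hm (by simpa using (hsub h).1)
      have h2 : (m, c) ∉ B0' := fun h => hm (by simpa using (hsub h).1)
      have h3 : ∀ c' : Bool, (m, c') ∉ B1' := fun c' h => hm ((hmem m c').1 h).1
      simp [h0, h1, h2, h3 false, h3 true, h3 c]

lemma Pmap_univ : Pmap (indLp Set.univ) = indLp Set.univ := by
  apply lp_ext; rintro ⟨m, c⟩
  simp [Pmap_apply, indLp_apply]

theorem stmt_15 {I : Type} (A : I → Set ℕ)
    (hAinf : ∀ ξ, (A ξ).Infinite)
    (hAad : ∀ ξ η : I, ξ ≠ η → (A ξ ∩ A η).Finite)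
    (B0 B1 : I → Set (ℕ × Bool))
    (hsplit : ∀ ξ, Splits (A ξ) (B0 ξ))
    (hcompl : ∀ ξ, B1 ξ = (A ξ ×ˢ (Set.univ : Set Bool)) \ B0 ξ)
    (ℬ : Set (Set (ℕ × Bool))) (hℬ : ℬ = Set.range B0 ∪ Set.range B1) :
    (∀ f g, Pmap (f + g) = Pmap f + Pmap g) ∧
    (∀ (c : ℝ) f, Pmap (c • f) = c • Pmap f) ∧
    (∀ f ∈ JLspace ℬ, Pmap f ∈ JLspace ℬ) ∧
    (∀ f, Pmap (Pmap f) = Pmap f) ∧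
    (∀ f, ‖Pmap f‖ ≤ ‖f‖) ∧
    (∃ f, f ≠ 0 ∧ ‖Pmap f‖ = ‖f‖) ∧
    ({f | f ∈ JLspace ℬ ∧ Pmap f = f} =
      {f | f ∈ JLspace ℬ ∧ ∀ n : ℕ, f (n, false) = f (n, true)}) ∧
    ({f | f ∈ JLspace ℬ ∧ Pmap f = 0} =
      {f | f ∈ JLspace ℬ ∧ ∀ n : ℕ, f (n, false) = - f (n, true)}) := by
  set S : Set (lp (fun _ : ℕ × Bool => ℝ) ⊤) :=
    (fun p : ℕ × Bool => indLp {p}) '' Set.univ ∪ indLp '' ℬ ∪ {indLp Set.univ} with hS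
  -- P maps the span into itself
  have hmaps : ∀ x ∈ Submodule.span ℝ S, Pmap x ∈ Submodule.span ℝ S := by
    intro x hx
    induction hx using Submodule.span_induction with
    | mem y hy =>
      rcases hy with (⟨q, -, rfl⟩ | ⟨B, hB, rfl⟩) | hy
      · rw [Pmap_single]
        apply Submodule.smul_mem; apply Submodule.add_mem <;>
          exact Submodule.subset_span (Or.inl (Or.inl ⟨_, Set.mem_univ _, rfl⟩))
      · rw [hℬ] at hB
        rcases hB with ⟨ξ, rfl⟩ | ⟨ξ, rfl⟩
        · rw [(Pmap_split (hsplit ξ) (hcompl ξ)).1]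
          apply Submodule.smul_mem; apply Submodule.add_mem <;>
            refine Submodule.subset_span (Or.inl (Or.inr ⟨_, ?_, rfl⟩)) <;>
            rw [hℬ]
          · exact Or.inl ⟨ξ, rfl⟩
          · exact Or.inr ⟨ξ, rfl⟩
        · rw [(Pmap_split (hsplit ξ) (hcompl ξ)).2]
          apply Submodule.smul_mem; apply Submodule.add_mem <;>
            refine Submodule.subset_span (Or.inl (Or.inr ⟨_, ?_, rfl⟩)) <;>
            rw [hℬ]
          · exact Or.inl ⟨ξ, rfl⟩
          · exact Or.inr ⟨ξ, rfl⟩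
      · rcases hy with rfl
        rw [Pmap_univ]
        exact Submodule.subset_span (Or.inr rfl)
    | zero =>
      have : Pmap 0 = 0 := by
        apply lp_ext; intro p; simp [Pmap_apply, lp.coeFn_zero]
      rw [this]; exact Submodule.zero_mem _
    | add y z hy hz ihy ihz => rw [Pmap_add]; exact Submodule.add_mem _ ihy ihz
    | smul c y hy ihy => rw [Pmap_smul]; exact Submodule.smul_mem _ _ ihy
  have hmem : ∀ f ∈ JLspace ℬ, Pmap f ∈ JLspace ℬ := by
    intro f hf
    have hf' : f ∈ closure ((Submodule.span ℝ S : Submodule ℝ _) : Set _) := by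
      rw [← Submodule.topologicalClosure_coe]
      exact hf
    show Pmap f ∈ ((Submodule.span ℝ S).topologicalClosure : Set _)
    rw [Submodule.topologicalClosure_coe]
    exact map_mem_closure Plin.continuous hf' (fun x hx => hmaps x hx)
  refine ⟨Pmap_add, Pmap_smul, hmem, ?_, Pmap_norm_le, ?_, ?_, ?_⟩
  · -- idempotent
    intro f
    apply lp_ext; rintro ⟨m, c⟩
    simp only [Pmap_apply]
    ring
  · -- norm attained
    refine ⟨indLp Set.univ, ?_, by rw [Pmap_univ]⟩
    intro h
    have h1 : indLp Set.univ (0, false) = (0 : lp (fun _ : ℕ × Bool => ℝ) ⊤) (0, false) := by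
      rw [h]
    rw [indLp_apply] at h1
    simp [lp.coeFn_zero] at h1
  · -- range
    ext f
    simp only [Set.mem_setOf_eq, and_congr_right_iff]
    intro _
    constructor
    · intro h n
      have h0 : Pmap f (n, false) = f (n, false) := by rw [h]
      have h1 : Pmap f (n, true) = f (n, true) := by rw [h]
      rw [Pmap_apply] at h0 h1
      simp only at h0 h1
      linarith
    · intro h
      apply lp_ext; rintro ⟨m, c⟩
      rw [Pmap_apply]
      have := h m
      cases c <;> simp only <;> linarith
  · -- kernel
    ext f
    simp only [Set.mem_setOf_eq, and_congr_right_iff]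
    intro _
    constructor
    · intro h n
      have h0 : Pmap f (n, false) = (0 : lp (fun _ : ℕ × Bool => ℝ) ⊤) (n, false) := by rw [h]
      rw [Pmap_apply] at h0
      simp only [lp.coeFn_zero, Pi.zero_apply] at h0
      linarith
    · intro h
      apply lp_ext; rintro ⟨m, c⟩
      rw [Pmap_apply]
      have := h m
      simp only [lp.coeFn_zero, Pi.zero_apply]
      linarith
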